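/- (Convergence of WSBD-SGD.) Let C : ℝ^d → ℝ be L-smooth and bounded below by C*. Let (F_t)_{t≥0} be a filtration, let (θ^t)_{t≥0} be random vectors in ℝ^d with θ^t F_t-measurable and C(θ^t) and ‖∇C(θ^t)‖² integrable for every t, and let (δ^t)_{t≥0} be random freezing masks satisfying E[δ^t_k | F_t] ≥ p_min almost surely for every coordinate k, with p_min > 0. Suppose θ^{t+1} = θ^t − η (δ^t ⊙ ∇C(θ^t)) almost surely, where η > 0 satisfies p_min > Lη/2. Then the expected squared gradient norms converge to zero on average: lim_{T→∞} (1/T) Σ_{t=0}^{T−1} E[‖∇C(θ^t)‖²] = 0. -/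

import Mathlib

open MeasureTheory Filter


lemma descent_lemma {E : Type*} [NormedAddCommGroup E] [InnerProductSpace ℝ E]
    [CompleteSpace E]
    (C : E → ℝ) (L : ℝ) (hdiff : Differentiable ℝ C)
    (hlip : ∀ x y, ‖gradient C x - gradient C y‖ ≤ L * ‖x - y‖) (x y : E) :
    C y ≤ C x + inner ℝ (gradient C x) (y - x) + L / 2 * ‖y - x‖ ^ 2 := by
  set v := y - x with hv
  have hline : ∀ s : ℝ, HasDerivAt (fun s : ℝ => C (x + s • v))
      (inner ℝ (gradient C (x + s • v)) v : ℝ) s := by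
    intro s
    have h1 : HasDerivAt (fun s : ℝ => x + s • v) v s := by
      simpa using ((hasDerivAt_id s).smul_const v).const_add x
    have h2 := (hdiff (x + s • v)).hasGradientAt
    have := h2.hasFDerivAt.comp_hasDerivAt s h1
    exact this
  have hgradlip : LipschitzWith (Real.toNNReal L) (gradient C) :=
    LipschitzWith.of_dist_le' (fun a b => by simpa [dist_eq_norm] using hlip a b)
  have hcont : Continuous fun s : ℝ => (inner ℝ (gradient C (x + s • v)) v : ℝ) := by
    exact (continuous_inner.comp ((hgradlip.continuous.comp
      (by continuity)).prodMk continuous_const))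
  have hftc : C y - C x = ∫ s in (0:ℝ)..1, (inner ℝ (gradient C (x + s • v)) v : ℝ) := by
    have := intervalIntegral.integral_eq_sub_of_hasDerivAt
      (f := fun s : ℝ => C (x + s • v))
      (fun s _ => hline s) (hcont.intervalIntegrable 0 1)
    simp only [one_smul, zero_smul, add_zero] at this
    rw [this]
    congr 1 <;> simp [hv]
  have hbound : ∀ s ∈ Set.Icc (0:ℝ) 1,
      (inner ℝ (gradient C (x + s • v)) v : ℝ) ≤ inner ℝ (gradient C x) v + L * s * ‖v‖ ^ 2 := by
    intro s hs
    have h1 : (inner ℝ (gradient C (x + s • v)) v : ℝ) - inner ℝ (gradient C x) v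
        = inner ℝ (gradient C (x + s • v) - gradient C x) v := by
      rw [inner_sub_left]
    have h2 : (inner ℝ (gradient C (x + s • v) - gradient C x) v : ℝ)
        ≤ ‖gradient C (x + s • v) - gradient C x‖ * ‖v‖ := real_inner_le_norm _ _
    have h3 : ‖gradient C (x + s • v) - gradient C x‖ ≤ L * (s * ‖v‖) := by
      have := hlip (x + s • v) x
      simpa [norm_smul, abs_of_nonneg hs.1, mul_assoc] using this
    nlinarith [norm_nonneg v, h2.trans (by nlinarith [norm_nonneg v] : ‖gradient C (x + s • v) - gradient C x‖ * ‖v‖ ≤ L * (s * ‖v‖) * ‖v‖)]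
  have hint : (∫ s in (0:ℝ)..1, (inner ℝ (gradient C (x + s • v)) v : ℝ))
      ≤ ∫ s in (0:ℝ)..1, (inner ℝ (gradient C x) v + L * s * ‖v‖ ^ 2 : ℝ) := by
    apply intervalIntegral.integral_mono_on zero_le_one
      (hcont.intervalIntegrable 0 1)
      ((by continuity : Continuous fun s : ℝ => (inner ℝ (gradient C x) v + L * s * ‖v‖ ^ 2 : ℝ)).intervalIntegrable 0 1)
    exact hbound
  have hval : (∫ s in (0:ℝ)..1, (inner ℝ (gradient C x) v + L * s * ‖v‖ ^ 2 : ℝ))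
      = inner ℝ (gradient C x) v + L / 2 * ‖v‖ ^ 2 := by
    rw [intervalIntegral.integral_add (intervalIntegrable_const) (by apply Continuous.intervalIntegrable; continuity)]
    have h4 : (fun s : ℝ => L * s * ‖v‖ ^ 2) = fun s : ℝ => (L * ‖v‖ ^ 2) * s := by
      ext s; ring
    rw [h4, intervalIntegral.integral_const_mul, integral_id]
    simp; ring
  linarith [hftc ▸ hint.trans_eq hval]

lemma euc_norm_sq {d : ℕ} (x : EuclideanSpace ℝ (Fin d)) :
    ‖x‖ ^ 2 = ∑ k, x k ^ 2 := by
  rw [EuclideanSpace.norm_eq, Real.sq_sqrt (by positivity)]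
  simp [sq_abs]

/-- **Convergence of WSBD-SGD.** Let `C : ℝ^d → ℝ` be `L`-smooth and bounded
below by `C*`. Let `(ℱ_t)` be a filtration, `(θ^t)` adapted random vectors with `C(θ^t)` and
`‖∇C(θ^t)‖²` integrable, and `(δ^t)` random freezing masks (coordinates in `{0,1}` a.s.) with
`E[δ^t_k | ℱ_t] ≥ p_min > 0` a.s. If `θ^{t+1} = θ^t − η (δ^t ⊙ ∇C(θ^t))` a.s., with `η > 0`
and `p_min > Lη/2`, then `(1/T) Σ_{t<T} E[‖∇C(θ^t)‖²] → 0` as `T → ∞`. -/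
theorem wsbd_sgd_convergence {Ω : Type*} {m0 : MeasurableSpace Ω}
    (μ : Measure Ω) [IsProbabilityMeasure μ] {d : ℕ} (hd : 0 < d)
    (C : EuclideanSpace ℝ (Fin d) → ℝ) (L Cstar : ℝ)
    (hdiff : Differentiable ℝ C)
    (hlip : ∀ x y, ‖gradient C x - gradient C y‖ ≤ L * ‖x - y‖)
    (hbdd : ∀ x, Cstar ≤ C x)
    (ℱ : Filtration ℕ m0)
    (θ : ℕ → Ω → EuclideanSpace ℝ (Fin d))
    (hadapt : ∀ t, StronglyMeasurable[ℱ t] (θ t))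
    (hCint : ∀ t, Integrable (fun ω => C (θ t ω)) μ)
    (hgint : ∀ t, Integrable (fun ω => ‖gradient C (θ t ω)‖ ^ 2) μ)
    (δ : ℕ → Ω → Fin d → ℝ)
    (hδmeas : ∀ t k, Measurable fun ω => δ t ω k)
    (h01 : ∀ t k, ∀ᵐ ω ∂μ, δ t ω k = 0 ∨ δ t ω k = 1)
    (pmin : ℝ) (hpmin : 0 < pmin)
    (hcond : ∀ t k, ∀ᵐ ω ∂μ, pmin ≤ (μ[fun ω' => δ t ω' k | ℱ t]) ω)
    (η : ℝ) (hη : 0 < η) (hstep : L * η / 2 < pmin)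
    (hupdate : ∀ t, ∀ᵐ ω ∂μ,
      θ (t + 1) ω = θ t ω - η • (WithLp.equiv 2 (Fin d → ℝ)).symm
        (fun k => δ t ω k * gradient C (θ t ω) k)) :
    Tendsto (fun T : ℕ =>
        (1 / (T : ℝ)) * ∑ t ∈ Finset.range T, ∫ ω, ‖gradient C (θ t ω)‖ ^ 2 ∂μ)
      atTop (nhds 0) := by
  -- gradient is continuous
  have hgradlip : LipschitzWith (Real.toNNReal L) (gradient C) :=
    LipschitzWith.of_dist_le' (fun a b => by simpa [dist_eq_norm] using hlip a b)
  set g : ℕ → Ω → EuclideanSpace ℝ (Fin d) := fun t ω => gradient C (θ t ω) with hg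
  have hgsm : ∀ t, StronglyMeasurable[ℱ t] (g t) := fun t =>
    hgradlip.continuous.comp_stronglyMeasurable (hadapt t)
  set f : ℕ → Fin d → Ω → ℝ := fun t k ω => g t ω k ^ 2 with hf
  have hfsm : ∀ t k, StronglyMeasurable[ℱ t] (f t k) := by
    intro t k
    exact (((EuclideanSpace.proj k : EuclideanSpace ℝ (Fin d) →L[ℝ] ℝ).continuous.comp_stronglyMeasurable (hgsm t)).pow 2)
  have hfm : ∀ t k, AEStronglyMeasurable (f t k) μ := fun t k =>
    ((hfsm t k).mono (ℱ.le t)).aestronglyMeasurable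
  have hnorm_eq : ∀ t ω, ‖g t ω‖ ^ 2 = ∑ k, f t k ω := fun t ω => euc_norm_sq _
  have hfnn : ∀ t k ω, (0:ℝ) ≤ f t k ω := fun t k ω => sq_nonneg _
  have hfle : ∀ t k ω, f t k ω ≤ ‖g t ω‖ ^ 2 := by
    intro t k ω
    rw [hnorm_eq]
    exact Finset.single_le_sum (f := fun j => f t j ω) (fun j _ => hfnn t j ω)
      (Finset.mem_univ k)
  have hfint : ∀ t k, Integrable (f t k) μ := by
    intro t k
    refine (hgint t).mono (hfm t k) (.of_forall fun ω => ?_)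
    rw [Real.norm_eq_abs, abs_of_nonneg (hfnn t k ω), Real.norm_eq_abs,
      abs_of_nonneg (sq_nonneg ‖g t ω‖)]
    exact hfle t k ω
  have hδint : ∀ t k, Integrable (fun ω => δ t ω k) μ := by
    intro t k
    refine (integrable_const (1:ℝ)).mono ((hδmeas t k).aestronglyMeasurable) ?_
    filter_upwards [h01 t k] with ω hω
    rcases hω with h | h <;> simp [h]
  have hprodint : ∀ t k, Integrable (fun ω => δ t ω k * f t k ω) μ := by
    intro t k
    refine (hgint t).mono (((hδmeas t k).aestronglyMeasurable).mul (hfm t k)) ?_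
    filter_upwards [h01 t k] with ω hω
    have hδ1 : |δ t ω k| ≤ 1 := by rcases hω with h | h <;> simp [h]
    rw [Real.norm_eq_abs, Real.norm_eq_abs, abs_mul, abs_of_nonneg (hfnn t k ω),
      abs_of_nonneg (sq_nonneg ‖g t ω‖)]
    calc |δ t ω k| * f t k ω ≤ 1 * f t k ω :=
          mul_le_mul_of_nonneg_right hδ1 (hfnn t k ω)
      _ = f t k ω := one_mul _
      _ ≤ ‖g t ω‖ ^ 2 := hfle t k ω
  -- pmin ≤ 1
  have hpmin1 : pmin ≤ 1 := by
    set k0 : Fin d := ⟨0, hd⟩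
    have hδle1 : (fun ω => δ 0 ω k0) ≤ᵐ[μ] fun _ => (1:ℝ) := by
      filter_upwards [h01 0 k0] with ω hω
      rcases hω with h | h <;> simp [h]
    have h1 : (μ[fun ω' => δ 0 ω' k0 | ℱ 0]) ≤ᵐ[μ] fun _ => (1:ℝ) := by
      refine (condExp_mono (hδint 0 k0) (integrable_const 1) hδle1).trans ?_
      rw [condExp_const (ℱ.le 0)]
    have := (hcond 0 k0).and h1
    rcases this.exists with ⟨ω, h2, h3⟩
    exact h2.trans h3
  -- key: per-coordinate conditional expectation bound
  have hkey : ∀ t k, pmin * ∫ ω, f t k ω ∂μ ≤ ∫ ω, δ t ω k * f t k ω ∂μ := by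
    intro t k
    set E : Ω → ℝ := μ[fun ω' => δ t ω' k | ℱ t] with hE
    have hEsm : StronglyMeasurable[ℱ t] E := stronglyMeasurable_condExp
    have hE1 : E ≤ᵐ[μ] fun _ => (1:ℝ) := by
      have hδle1 : (fun ω => δ t ω k) ≤ᵐ[μ] fun _ => (1:ℝ) := by
        filter_upwards [h01 t k] with ω hω; rcases hω with h | h <;> simp [h]
      refine (condExp_mono (hδint t k) (integrable_const 1) hδle1).trans ?_
      rw [condExp_const (ℱ.le t)]
    have hpull : μ[(f t k) * (fun ω => δ t ω k) | ℱ t]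
        =ᵐ[μ] (f t k) * E := by
      refine condExp_mul_of_stronglyMeasurable_left (hfsm t k) ?_ (hδint t k)
      have : ((f t k) * fun ω => δ t ω k) = fun ω => δ t ω k * f t k ω := by
        ext ω; simp [mul_comm]
      rw [this]; exact hprodint t k
    have hE0 : (0:Ω → ℝ) ≤ᵐ[μ] E := by
      refine condExp_nonneg ?_
      filter_upwards [h01 t k] with ω hω
      rcases hω with h | h <;> simp [h]
    have hfEint : Integrable ((f t k) * E) μ := by
      refine (hfint t k).mono
        (((hfm t k)).mul ((hEsm.mono (ℱ.le t)).aestronglyMeasurable)) ?_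
      filter_upwards [hE1, hE0] with ω h1 h0
      simp only [Pi.zero_apply] at h0
      simp only [Pi.mul_apply, Real.norm_eq_abs, abs_mul,
        abs_of_nonneg (hfnn t k ω), abs_of_nonneg h0]
      calc f t k ω * E ω ≤ f t k ω * 1 :=
            mul_le_mul_of_nonneg_left h1 (hfnn t k ω)
        _ = f t k ω := mul_one _
    have h1 : ∫ ω, δ t ω k * f t k ω ∂μ = ∫ ω, f t k ω * E ω ∂μ := by
      have h2 : ∫ ω, δ t ω k * f t k ω ∂μ = ∫ ω, ((f t k) * fun ω => δ t ω k) ω ∂μ := by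
        congr 1; ext ω; simp [mul_comm]
      rw [h2, ← integral_condExp (ℱ.le t) (μ := μ)]
      exact integral_congr_ae hpull
    rw [h1]
    have h3 : pmin * ∫ ω, f t k ω ∂μ = ∫ ω, pmin * f t k ω ∂μ := by
      rw [integral_const_mul]
    rw [h3]
    refine integral_mono_ae ((hfint t k).const_mul pmin) hfEint ?_
    filter_upwards [hcond t k] with ω hω
    calc pmin * f t k ω ≤ E ω * f t k ω :=
          mul_le_mul_of_nonneg_right hω (hfnn t k ω)
      _ = (f t k * E) ω := mul_comm _ _
  -- sums over coordinates
  set S : ℕ → Ω → ℝ := fun t ω => ∑ k, δ t ω k * f t k ω with hS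
  have hSint : ∀ t, Integrable (S t) μ := fun t =>
    integrable_finset_sum _ (fun k _ => hprodint t k)
  -- pointwise descent inequality
  have hdescent : ∀ t, ∀ᵐ ω ∂μ,
      C (θ (t+1) ω) ≤ C (θ t ω) - (η - L * η ^ 2 / 2) * S t ω := by
    intro t
    have h01all : ∀ᵐ ω ∂μ, ∀ k, δ t ω k = 0 ∨ δ t ω k = 1 := ae_all_iff.mpr (h01 t)
    filter_upwards [hupdate t, h01all] with ω hup hδω
    have hdl := descent_lemma C L hdiff hlip (θ t ω) (θ (t+1) ω)
    set w : EuclideanSpace ℝ (Fin d) :=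
      (WithLp.equiv 2 (Fin d → ℝ)).symm (fun k => δ t ω k * g t ω k) with hw
    have hdiffvec : θ (t+1) ω - θ t ω = -(η • w) := by
      rw [hup]; abel
    have hwk : ∀ k, w k = δ t ω k * g t ω k := fun k => rfl
    have hinner : (inner ℝ (g t ω) (θ (t+1) ω - θ t ω) : ℝ) = -(η * S t ω) := by
      rw [hdiffvec, inner_neg_right, real_inner_smul_right]
      congr 1
      congr 1
      rw [PiLp.inner_apply]
      simp only [RCLike.inner_apply, conj_trivial, hS]
      apply Finset.sum_congr rfl
      intro k _
      rw [hwk k]; simp only [hf]; ring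
    have hwsq : ‖w‖ ^ 2 = S t ω := by
      rw [euc_norm_sq]
      apply Finset.sum_congr rfl
      intro k _
      rw [hwk k]
      rcases hδω k with h | h <;> simp [h, hf] <;> ring
    have hnormsq : ‖θ (t+1) ω - θ t ω‖ ^ 2 = η ^ 2 * S t ω := by
      rw [hdiffvec, norm_neg, norm_smul, mul_pow, Real.norm_eq_abs, sq_abs, hwsq]
    rw [hinner, hnormsq] at hdl
    nlinarith [hdl]
  -- integrate the descent inequality
  have hCrec : ∀ t, ∫ ω, C (θ (t+1) ω) ∂μ
      ≤ ∫ ω, C (θ t ω) ∂μ - (η - L * η ^ 2 / 2) * ∫ ω, S t ω ∂μ := by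
    intro t
    have h1 : ∫ ω, C (θ (t+1) ω) ∂μ
        ≤ ∫ ω, (C (θ t ω) - (η - L * η ^ 2 / 2) * S t ω) ∂μ :=
      integral_mono_ae (hCint (t+1)) ((hCint t).sub ((hSint t).const_mul _)) (hdescent t)
    rwa [integral_sub (hCint t) ((hSint t).const_mul _), integral_const_mul] at h1
  have hSge : ∀ t, pmin * ∫ ω, ‖gradient C (θ t ω)‖ ^ 2 ∂μ ≤ ∫ ω, S t ω ∂μ := by
    intro t
    have h1 : ∫ ω, S t ω ∂μ = ∑ k, ∫ ω, δ t ω k * f t k ω ∂μ :=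
      integral_finset_sum _ (fun k _ => hprodint t k)
    have h2 : ∫ ω, ‖gradient C (θ t ω)‖ ^ 2 ∂μ = ∑ k, ∫ ω, f t k ω ∂μ := by
      rw [← integral_finset_sum _ (fun k _ => hfint t k)]
      exact integral_congr_ae (.of_forall fun ω => hnorm_eq t ω)
    rw [h1, h2, Finset.mul_sum]
    exact Finset.sum_le_sum (fun k _ => hkey t k)
  -- constants
  have hc' : 0 < η - L * η ^ 2 / 2 := by nlinarith
  set c : ℝ := (η - L * η ^ 2 / 2) * pmin with hc_def
  have hc : 0 < c := mul_pos hc' hpmin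
  set b : ℕ → ℝ := fun t => ∫ ω, ‖gradient C (θ t ω)‖ ^ 2 ∂μ with hb
  have hbnn : ∀ t, 0 ≤ b t := fun t => integral_nonneg (fun ω => sq_nonneg _)
  have hrec : ∀ t, ∫ ω, C (θ (t+1) ω) ∂μ ≤ ∫ ω, C (θ t ω) ∂μ - c * b t := by
    intro t
    have h1 := mul_le_mul_of_nonneg_left (hSge t) hc'.le
    have h2 := hCrec t
    rw [hc_def]
    nlinarith
  have haC : ∀ t, Cstar ≤ ∫ ω, C (θ t ω) ∂μ := by
    intro t
    have := integral_mono (integrable_const Cstar) (hCint t) (fun ω => hbdd (θ t ω))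
    simpa using this
  have hsum : ∀ T, ∫ ω, C (θ T ω) ∂μ + c * ∑ t ∈ Finset.range T, b t
      ≤ ∫ ω, C (θ 0 ω) ∂μ := by
    intro T
    induction T with
    | zero => simp
    | succ T ih =>
      rw [Finset.sum_range_succ]
      have := hrec T
      nlinarith
  set K : ℝ := (∫ ω, C (θ 0 ω) ∂μ - Cstar) / c with hK
  have hK0 : 0 ≤ K := div_nonneg (by linarith [haC 0]) hc.le
  have hsum' : ∀ T, ∑ t ∈ Finset.range T, b t ≤ K := by
    intro T
    rw [hK, le_div_iff₀ hc]
    have := hsum T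
    have := haC T
    nlinarith
  refine squeeze_zero (g := fun T : ℕ => K / T)
    (fun T => mul_nonneg (by positivity) (Finset.sum_nonneg fun t _ => hbnn t))
    (fun T => ?_) (tendsto_const_div_atTop_nhds_zero_nat K)
  rcases Nat.eq_zero_or_pos T with h | h
  · simp [h]
  · show 1 / (T:ℝ) * (Finset.range T).sum b ≤ K / T
    rw [show K / (T:ℝ) = 1/(T:ℝ) * K by ring]
    exact mul_le_mul_of_nonneg_left (hsum' T) (by positivity)
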